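/- Let G=(V,E) be a finite graph with positive edge weights W and let m ≥ 1 be a natural number. Let G'=(V',E') be the m-fold blow-up of G: V' = V × {1,…,m}, and each edge e={u,v} ∈ E of weight W_e is replaced by the m² edges {(u,i),(v,j)} for i,j ∈ {1,…,m}, each of weight W_e. If MSVC(G) ≤ τ·|V|·W_G(E) for some real τ > 0, then MSVC(G') ≤ τ·|V'|·W_{G'}(E'). -/
import Mathlib


/-- The position (in `{1, …, n}`) at which vertex `v` is visited by the ordering `σ`. -/
def vertexPos {V : Type*} [Fintype V] (σ : Fin (Fintype.card V) ≃ V) (v : V) : ℕ :=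
  (σ.symm v : ℕ) + 1

/-- The cover time `c_{σ,e}` of an edge with endpoints `u` and `w` under the ordering `σ`. -/
def coverTime {V : Type*} [Fintype V] (σ : Fin (Fintype.card V) ≃ V) (u w : V) : ℕ :=
  min (vertexPos σ u) (vertexPos σ w)

/-- The sum vertex cover value `SVC_G(σ) = Σ_e W_e · c_{σ,e}` of a weighted multigraph whose
edges are indexed by `ι`, with endpoint maps `a b : ι → V` and weights `W`. -/
noncomputable def SVC {V ι : Type*} [Fintype V] [Fintype ι]
    (a b : ι → V) (W : ι → ℝ) (σ : Fin (Fintype.card V) ≃ V) : ℝ :=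
  ∑ e : ι, W e * (coverTime σ (a e) (b e) : ℝ)

/-- Let `G` be a finite graph with positive edge weights and let `G'` be its
`m`-fold blow-up: vertices `V × Fin m`, and each edge `e = {u,v}` of weight `W e` replaced by
the `m²` edges `{(u,i),(v,j)}`, each of weight `W e`.  If `MSVC(G) ≤ τ·|V|·W_G(E)` (i.e. some
ordering achieves this value) then `MSVC(G') ≤ τ·|V'|·W_{G'}(E')`. -/
theorem blowup_completeness {V ι : Type*} [Fintype V] [Fintype ι]
    (a b : ι → V) (W : ι → ℝ) (hW : ∀ e, 0 < W e)
    (m : ℕ) (hm : 1 ≤ m) (τ : ℝ) (hτ : 0 < τ)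
    (h : ∃ σ : Fin (Fintype.card V) ≃ V,
      SVC a b W σ ≤ τ * (Fintype.card V : ℝ) * ∑ e : ι, W e) :
    ∃ σ' : Fin (Fintype.card (V × Fin m)) ≃ V × Fin m,
      SVC (fun p : ι × Fin m × Fin m => (a p.1, p.2.1))
          (fun p : ι × Fin m × Fin m => (b p.1, p.2.2))
          (fun p : ι × Fin m × Fin m => W p.1) σ' ≤
        τ * (Fintype.card (V × Fin m) : ℝ) * ∑ p : ι × Fin m × Fin m, W p.1 := by

  classical
  obtain ⟨σ, hσ⟩ := h
  have hcard : Fintype.card (V × Fin m) = Fintype.card V * m := by simp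
  let σ' : Fin (Fintype.card (V × Fin m)) ≃ V × Fin m :=
    (finCongr hcard).trans (finProdFinEquiv.symm.trans (σ.prodCongr (Equiv.refl (Fin m))))
  refine ⟨σ', ?_⟩
  have hpos : ∀ (v : V) (i : Fin m), vertexPos σ' (v, i) ≤ m * vertexPos σ v := by
    intro v i
    have h1 : σ'.symm (v, i) = (finCongr hcard).symm (finProdFinEquiv (σ.symm v, i)) := rfl
    have h2 : (σ'.symm (v, i) : ℕ) = (i : ℕ) + m * (σ.symm v : ℕ) := by
      rw [h1]; simp [finProdFinEquiv]
    unfold vertexPos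
    rw [h2]
    have : (i : ℕ) + 1 ≤ m := i.2
    nlinarith [Nat.zero_le ((σ.symm v : ℕ))]
  have hc : ∀ (e : ι) (i j : Fin m),
      coverTime σ' (a e, i) (b e, j) ≤ m * coverTime σ (a e) (b e) := by
    intro e i j
    unfold coverTime
    calc min (vertexPos σ' (a e, i)) (vertexPos σ' (b e, j))
        ≤ min (m * vertexPos σ (a e)) (m * vertexPos σ (b e)) :=
          min_le_min (hpos (a e) i) (hpos (b e) j)
      _ = m * min (vertexPos σ (a e)) (vertexPos σ (b e)) := (Nat.mul_min_mul_left _ _ _)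
  have key : ∀ g : ι → ℝ, ∑ p : ι × Fin m × Fin m, g p.1 = (m : ℝ)^2 * ∑ e, g e := by
    intro g
    rw [Fintype.sum_prod_type, Finset.mul_sum]
    refine Finset.sum_congr rfl fun e _ => ?_
    have : ∑ y : Fin m × Fin m, g (e, y).1 = ∑ _y : Fin m × Fin m, g e := rfl
    rw [this, Finset.sum_const, Finset.card_univ, Fintype.card_prod, Fintype.card_fin, nsmul_eq_mul]
    push_cast
    ring
  have step1 : SVC (fun p : ι × Fin m × Fin m => (a p.1, p.2.1))
          (fun p : ι × Fin m × Fin m => (b p.1, p.2.2))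
          (fun p : ι × Fin m × Fin m => W p.1) σ'
      ≤ ∑ p : ι × Fin m × Fin m, (m : ℝ) * (W p.1 * (coverTime σ (a p.1) (b p.1) : ℝ)) := by
    unfold SVC
    apply Finset.sum_le_sum
    intro p _
    have hcp := hc p.1 p.2.1 p.2.2
    have : (coverTime σ' (a p.1, p.2.1) (b p.1, p.2.2) : ℝ)
        ≤ (m : ℝ) * (coverTime σ (a p.1) (b p.1) : ℝ) := by exact_mod_cast hcp
    calc W p.1 * (coverTime σ' (a p.1, p.2.1) (b p.1, p.2.2) : ℝ)
        ≤ W p.1 * ((m : ℝ) * (coverTime σ (a p.1) (b p.1) : ℝ)) :=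
          mul_le_mul_of_nonneg_left this (hW p.1).le
      _ = (m : ℝ) * (W p.1 * (coverTime σ (a p.1) (b p.1) : ℝ)) := by ring
  have step2 : ∑ p : ι × Fin m × Fin m, (m : ℝ) * (W p.1 * (coverTime σ (a p.1) (b p.1) : ℝ))
      = (m : ℝ)^3 * SVC a b W σ := by
    rw [← Finset.mul_sum, key (fun e => W e * (coverTime σ (a e) (b e) : ℝ))]
    unfold SVC; ring
  have hrhs : τ * (Fintype.card (V × Fin m) : ℝ) * ∑ p : ι × Fin m × Fin m, W p.1
      = (m : ℝ)^3 * (τ * (Fintype.card V : ℝ) * ∑ e : ι, W e) := by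
    rw [key W, hcard]
    push_cast
    ring
  rw [hrhs]
  calc _ ≤ (m : ℝ)^3 * SVC a b W σ := by rw [← step2]; exact step1
    _ ≤ (m : ℝ)^3 * (τ * (Fintype.card V : ℝ) * ∑ e : ι, W e) :=
        mul_le_mul_of_nonneg_left hσ (by positivity)
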